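/- Let A, B > 0 be commuting positive definite matrices with pI ≥ AB⁻¹ ≥ qI for some p, q > 0. Then for every vector h, ‖Ah‖·‖Bh‖ ≤ ((p+q)/(2√(pq)))·⟨Ah, Bh⟩. -/

import Mathlib

open Matrix ComplexOrder

theorem cassel_operator {n : ℕ} (A B : Matrix (Fin n) (Fin n) ℂ)
    (hA : A.PosDef) (hB : B.PosDef) (hcomm : A * B = B * A) (p q : ℝ)
    (hp : 0 < p) (hq : 0 < q)
    (hup : (((p : ℂ) • (1 : Matrix (Fin n) (Fin n) ℂ)) - A * B⁻¹).PosSemidef)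
    (hlo : (A * B⁻¹ - ((q : ℂ) • (1 : Matrix (Fin n) (Fin n) ℂ))).PosSemidef)
    (h : EuclideanSpace ℂ (Fin n)) :
    ‖Matrix.toEuclideanLin A h‖ * ‖Matrix.toEuclideanLin B h‖ ≤
      (p + q) / (2 * Real.sqrt (p * q)) *
        (inner ℂ (Matrix.toEuclideanLin A h) (Matrix.toEuclideanLin B h) : ℂ).re := by
  have hdet : IsUnit B.det := (Matrix.isUnit_iff_isUnit_det B).mp hB.isUnit
  have hBB : B⁻¹ * B = 1 := Matrix.nonsing_inv_mul B hdet
  have hBB' : B * B⁻¹ = 1 := Matrix.mul_nonsing_inv B hdet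
  have hcomm' : A * B⁻¹ = B⁻¹ * A := by
    calc A * B⁻¹ = B⁻¹ * B * A * B⁻¹ := by rw [hBB, Matrix.one_mul]
      _ = B⁻¹ * (B * A) * B⁻¹ := by rw [Matrix.mul_assoc B⁻¹ B A]
      _ = B⁻¹ * (A * B) * B⁻¹ := by rw [← hcomm]
      _ = B⁻¹ * A * (B * B⁻¹) := by simp only [Matrix.mul_assoc]
      _ = B⁻¹ * A := by rw [hBB', Matrix.mul_one]
  have hTH : (A * B⁻¹).IsHermitian := by
    have h1 : (A * B⁻¹)ᴴ = B⁻¹ᴴ * Aᴴ := Matrix.conjTranspose_mul A B⁻¹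
    rw [Matrix.IsHermitian, h1, hB.posSemidef.isHermitian.inv, hA.posSemidef.isHermitian,
      ← hcomm']
  set T : Matrix (Fin n) (Fin n) ℂ := A * B⁻¹ with hT
  open scoped MatrixOrder in set R : Matrix (Fin n) (Fin n) ℂ := CFC.sqrt (T - (q : ℂ) • 1) with hRdef
  have hR2 : R * R = T - (q : ℂ) • 1 := by open scoped MatrixOrder in exact CFC.sqrt_mul_sqrt_self _ hlo.nonneg
  have hRH : Rᴴ = R := by open scoped MatrixOrder in exact (CFC.sqrt_nonneg _).posSemidef.isHermitian
  have hTR : T = R * R + (q : ℂ) • 1 := by rw [hR2]; abel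
  have hRT : R * T = T * R := by
    rw [hTR, Matrix.mul_add, Matrix.add_mul, ← Matrix.mul_assoc, Matrix.mul_assoc,
      Matrix.mul_smul, Matrix.smul_mul, Matrix.mul_one, Matrix.one_mul]
  set S₁ : Matrix (Fin n) (Fin n) ℂ := (p : ℂ) • 1 - T with hS1
  set S₂ : Matrix (Fin n) (Fin n) ℂ := T - (q : ℂ) • 1 with hS2
  have hRS1 : R * S₁ = S₁ * R := by
    rw [hS1, Matrix.mul_sub, Matrix.sub_mul, hRT, Matrix.mul_smul, Matrix.smul_mul,
      Matrix.mul_one, Matrix.one_mul]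
  have hkey : S₁ * S₂ = Rᴴ * S₁ * R := by
    rw [hRH, hRS1, Matrix.mul_assoc, hR2]
  have hSS : (S₁ * S₂).PosSemidef := hkey ▸ hup.conjTranspose_mul_mul_same R
  set hv : Fin n → ℂ := (WithLp.equiv 2 (Fin n → ℂ)) h with hhv
  set u : Fin n → ℂ := A *ᵥ hv with hu
  set v : Fin n → ℂ := B *ᵥ hv with hv'
  have hTv : T *ᵥ v = u := by
    rw [hv', Matrix.mulVec_mulVec, hT, Matrix.mul_assoc, hBB, Matrix.mul_one]
  have h0 : 0 ≤ Complex.re (star v ⬝ᵥ (S₁ * S₂) *ᵥ v) := hSS.re_dotProduct_nonneg v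
  have hexpand : S₁ * S₂ = (p : ℂ) • T + (q : ℂ) • T - T * T - ((p : ℂ) * q) • 1 := by
    rw [hS1, hS2]
    simp only [Matrix.sub_mul, Matrix.mul_sub, Matrix.smul_mul, Matrix.mul_smul,
      Matrix.one_mul, Matrix.mul_one, smul_smul, smul_sub, smul_add,
      mul_comm (q:ℂ) (p:ℂ)]
    abel
  have he : star v ⬝ᵥ (T * T) *ᵥ v = star u ⬝ᵥ u := by
    rw [← Matrix.mulVec_mulVec, hTv, Matrix.dotProduct_mulVec, ← hTH.eq, ← Matrix.star_mulVec, hTv]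
  have hd : star v ⬝ᵥ T *ᵥ v = star v ⬝ᵥ u := by rw [hTv]
  have hinner : (inner ℂ (Matrix.toEuclideanLin A h) (Matrix.toEuclideanLin B h) : ℂ) =
      star u ⬝ᵥ v := by
    exact dotProduct_comm _ _
  have hnormu : Complex.re (star u ⬝ᵥ u) = ‖Matrix.toEuclideanLin A h‖ ^ 2 := by
    rw [← inner_self_eq_norm_sq (𝕜 := ℂ)]
    congr 1
    exact dotProduct_comm _ _
  have hnormv : Complex.re (star v ⬝ᵥ v) = ‖Matrix.toEuclideanLin B h‖ ^ 2 := by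
    rw [← inner_self_eq_norm_sq (𝕜 := ℂ)]
    congr 1
    exact dotProduct_comm _ _
  set a : ℝ := ‖Matrix.toEuclideanLin A h‖ with ha
  set b : ℝ := ‖Matrix.toEuclideanLin B h‖ with hb
  set c : ℝ := Complex.re (inner ℂ (Matrix.toEuclideanLin A h) (Matrix.toEuclideanLin B h) : ℂ)
    with hc
  have hcre : Complex.re (star v ⬝ᵥ u) = c := by
    rw [Matrix.star_dotProduct, hc, hinner]
    exact Complex.conj_re _
  have hmain : a ^ 2 + p * q * b ^ 2 ≤ (p + q) * c := by
    rw [hexpand] at h0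
    have hform : star v ⬝ᵥ ((p : ℂ) • T + (q : ℂ) • T - T * T - ((p : ℂ) * q) • 1) *ᵥ v
        = (p : ℂ) * (star v ⬝ᵥ u) + (q : ℂ) * (star v ⬝ᵥ u) - star u ⬝ᵥ u
          - ((p : ℂ) * q) * (star v ⬝ᵥ v) := by
      simp only [Matrix.sub_mulVec, Matrix.add_mulVec, Matrix.smul_mulVec,
        dotProduct_sub, dotProduct_add, dotProduct_smul,
        Matrix.one_mulVec, smul_eq_mul, he, hd]
    rw [hform] at h0
    rw [← Complex.ofReal_mul] at h0
    simp only [Complex.sub_re, Complex.add_re, Complex.mul_re, Complex.ofReal_re,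
      Complex.ofReal_im, zero_mul, sub_zero] at h0
    rw [hcre] at h0
    rw [← hnormu, ← hnormv]
    nlinarith [h0]
  have ha0 : 0 ≤ a := norm_nonneg _
  have hb0 : 0 ≤ b := norm_nonneg _
  set s : ℝ := Real.sqrt (p * q) with hs
  have hs0 : 0 < s := Real.sqrt_pos.mpr (mul_pos hp hq)
  have hs2 : s ^ 2 = p * q := Real.sq_sqrt (mul_pos hp hq).le
  have hamgm : 2 * s * (a * b) ≤ a ^ 2 + p * q * b ^ 2 := by nlinarith [sq_nonneg (a - s * b)]
  have hcnn : 0 ≤ c := by nlinarith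
  rw [div_mul_eq_mul_div, le_div_iff₀ (by positivity : (0:ℝ) < 2 * s)]
  nlinarith
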